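/- Two diagonal matrices diag(p^{a₁},…,p^{a_n}) and diag(p^{b₁},…,p^{b_n}) over a discrete valuation ring with uniformizer p, where a₁ ≤ ⋯ ≤ a_n and b₁ ≤ ⋯ ≤ b_n, are equivalent (D₂ = Q⁻¹ D₁ P with P, Q invertible) if and only if aᵢ = bᵢ for all i. -/

import Mathlib

open Matrix Finset

section aux

variable {R : Type*} [CommRing R]

/-- Expansion of a determinant of a product of rectangular matrices. -/
lemma det_mul_expand {k n : ℕ} (A : Matrix (Fin k) (Fin n) R) (B : Matrix (Fin n) (Fin k) R) :
    (A * B).det = ∑ f : Fin k → Fin n, (∏ i, B (f i) i) * (A.submatrix id f).det := by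
  calc (A * B).det
      = ∑ f : Fin k → Fin n, ∑ σ : Equiv.Perm (Fin k),
          Equiv.Perm.sign σ * ∏ i, A (σ i) (f i) * B (f i) i := by
        simp only [det_apply', mul_apply, prod_univ_sum, mul_sum, Fintype.piFinset_univ]
        rw [Finset.sum_comm]
    _ = _ := by
        refine Finset.sum_congr rfl fun f _ => ?_
        rw [det_apply', Finset.mul_sum]
        refine Finset.sum_congr rfl fun σ _ => ?_
        simp only [submatrix_apply, id_eq, Finset.prod_mul_distrib]
        ring

/-- `x` divides all `k × k` minors of `M`. -/
def AllMinorsDvd (x : R) (k : ℕ) {n : ℕ} (M : Matrix (Fin n) (Fin n) R) : Prop :=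
  ∀ r c : Fin k → Fin n, x ∣ (M.submatrix r c).det

lemma AllMinorsDvd.mul_right {x : R} {k n : ℕ} {M : Matrix (Fin n) (Fin n) R}
    (h : AllMinorsDvd x k M) (N : Matrix (Fin n) (Fin n) R) :
    AllMinorsDvd x k (M * N) := by
  intro r c
  rw [Matrix.submatrix_mul M N r id c Function.bijective_id, det_mul_expand]
  refine Finset.dvd_sum fun f _ => Dvd.dvd.mul_left ?_ _
  simpa using h r f

lemma AllMinorsDvd.transpose {x : R} {k n : ℕ} {M : Matrix (Fin n) (Fin n) R}
    (h : AllMinorsDvd x k M) : AllMinorsDvd x k Mᵀ := by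
  intro r c
  rw [← Matrix.transpose_submatrix, Matrix.det_transpose]
  exact h c r

lemma AllMinorsDvd.mul_left {x : R} {k n : ℕ} {M : Matrix (Fin n) (Fin n) R}
    (h : AllMinorsDvd x k M) (N : Matrix (Fin n) (Fin n) R) :
    AllMinorsDvd x k (N * M) := by
  have := (h.transpose.mul_right Nᵀ).transpose
  rwa [Matrix.transpose_mul, Matrix.transpose_transpose, Matrix.transpose_transpose] at this

lemma strictMono_le_apply {k n : ℕ} {g : Fin k → Fin n} (hg : StrictMono g) (j : Fin k) :
    (j : ℕ) ≤ (g j : ℕ) := by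
  obtain ⟨m, hm⟩ := j
  induction m with
  | zero => exact Nat.zero_le _
  | succ m ih =>
      have hm' : m < k := Nat.lt_of_succ_lt hm
      have h1 : (g ⟨m, hm'⟩ : ℕ) < (g ⟨m + 1, hm⟩ : ℕ) := hg (by simp [Fin.lt_def])
      have h2 := ih hm'
      simp only at *
      omega

/-- key inequality: sum of the smallest k values of a monotone function bounds
the sum over any injective choice of k indices. -/
lemma sum_first_le {n k : ℕ} (a : Fin n → ℕ) (ha : Monotone a) (hk : k ≤ n)
    (c : Fin k → Fin n) (hc : Function.Injective c) :
    ∑ j : Fin k, a (Fin.castLE hk j) ≤ ∑ j : Fin k, a (c j) := by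
  set s : Finset (Fin n) := Finset.univ.image c with hs
  have hcard : s.card = k := by
    rw [hs, Finset.card_image_of_injective _ hc, Finset.card_univ, Fintype.card_fin]
  have hsum : ∑ j : Fin k, a (c j) = ∑ j : Fin k, a (s.orderEmbOfFin hcard j) := by
    rw [← Finset.sum_image (fun x _ y _ h => hc h)]
    rw [← Finset.sum_image (f := a) (g := s.orderEmbOfFin hcard) (s := Finset.univ)
      (fun x _ y _ h => (s.orderEmbOfFin hcard).injective h)]
    congr 1
    rw [← hs, ← Finset.coe_inj]
    simp [Finset.coe_image, Set.image_univ, Finset.range_orderEmbOfFin]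
  rw [hsum]
  refine Finset.sum_le_sum fun j _ => ha ?_
  have := strictMono_le_apply (s.orderEmbOfFin hcard).strictMono j
  exact Fin.le_def.mpr (by simpa using this)

variable [IsDomain R]

omit [IsDomain R] in
lemma diag_allMinorsDvd {n k : ℕ} (p : R) (a : Fin n → ℕ) (ha : Monotone a) (hk : k ≤ n) :
    AllMinorsDvd (p ^ ∑ j : Fin k, a (Fin.castLE hk j)) k
      (Matrix.diagonal (fun i => p ^ a i)) := by
  intro r c
  by_cases hr : Function.Injective r
  · by_cases hc : Function.Injective c
    · rw [Matrix.det_apply']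
      refine Finset.dvd_sum fun σ _ => Dvd.dvd.mul_left ?_ _
      by_cases hrc : ∀ i, r (σ i) = c i
      · have : ∀ i : Fin k, (Matrix.diagonal (fun i => p ^ a i)).submatrix r c (σ i) i
            = p ^ a (c i) := by
          intro i
          rw [Matrix.submatrix_apply, hrc i, Matrix.diagonal_apply_eq]
        rw [Finset.prod_congr rfl fun i _ => this i, Finset.prod_pow_eq_pow_sum]
        exact pow_dvd_pow p (sum_first_le a ha hk c hc)
      · push_neg at hrc
        obtain ⟨i, hi⟩ := hrc
        rw [Finset.prod_eq_zero (Finset.mem_univ i)]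
        · exact dvd_zero _
        · rw [Matrix.submatrix_apply, Matrix.diagonal_apply_ne _ hi]
    · rw [Function.not_injective_iff] at hc
      obtain ⟨i, j, hij, hne⟩ := hc
      rw [Matrix.det_zero_of_column_eq hne fun l => by simp [hij]]
      exact dvd_zero _
  · rw [Function.not_injective_iff] at hr
    obtain ⟨i, j, hij, hne⟩ := hr
    rw [Matrix.det_zero_of_row_eq hne (funext fun l => by simp [hij])]
    exact dvd_zero _

/-- Main inequality lemma. -/
lemma prefix_sum_le {n : ℕ} (p : R) (hp : Irreducible p)
    (a b : Fin n → ℕ) (ha : Monotone a)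
    (P Q : GL (Fin n) R)
    (h : Matrix.diagonal (fun i => p ^ b i)
        = (↑Q⁻¹ : Matrix (Fin n) (Fin n) R) * Matrix.diagonal (fun i => p ^ a i)
            * (↑P : Matrix (Fin n) (Fin n) R))
    (k : ℕ) (hk : k ≤ n) :
    ∑ j : Fin k, a (Fin.castLE hk j) ≤ ∑ j : Fin k, b (Fin.castLE hk j) := by
  have hmin : AllMinorsDvd (p ^ ∑ j : Fin k, a (Fin.castLE hk j)) k
      (Matrix.diagonal (fun i => p ^ b i)) := by
    rw [h]
    exact ((diag_allMinorsDvd p a ha hk).mul_left _).mul_right _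
  have := hmin (Fin.castLE hk) (Fin.castLE hk)
  rw [Matrix.submatrix_diagonal _ _ (Fin.castLE_injective hk), Matrix.det_diagonal] at this
  simp only [Function.comp] at this
  rw [Finset.prod_pow_eq_pow_sum] at this
  exact (pow_dvd_pow_iff hp.ne_zero hp.not_isUnit).mp this

end aux

theorem stmt_18 {R : Type*} [CommRing R] [IsDomain R] [IsDiscreteValuationRing R]
    (p : R) (hp : Irreducible p) {n : ℕ}
    (a b : Fin n → ℕ) (ha : Monotone a) (hb : Monotone b) :
    (∃ P Q : GL (Fin n) R,
        Matrix.diagonal (fun i => p ^ b i)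
          = (↑Q⁻¹ : Matrix (Fin n) (Fin n) R) * Matrix.diagonal (fun i => p ^ a i)
              * (↑P : Matrix (Fin n) (Fin n) R)) ↔ a = b := by
  constructor
  · rintro ⟨P, Q, h⟩
    have h' : Matrix.diagonal (fun i => p ^ a i)
        = (↑(Q⁻¹)⁻¹ : Matrix (Fin n) (Fin n) R) * Matrix.diagonal (fun i => p ^ b i)
            * (↑P⁻¹ : Matrix (Fin n) (Fin n) R) := by
      rw [h]
      rw [inv_inv]
      have hQ : (↑Q : Matrix (Fin n) (Fin n) R) * (↑Q⁻¹ : Matrix (Fin n) (Fin n) R) = 1 := by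
        rw [← Units.val_mul, mul_inv_cancel, Units.val_one]
      have hP : (↑P : Matrix (Fin n) (Fin n) R) * (↑P⁻¹ : Matrix (Fin n) (Fin n) R) = 1 := by
        rw [← Units.val_mul, mul_inv_cancel, Units.val_one]
      rw [Matrix.mul_assoc, Matrix.mul_assoc, hP, Matrix.mul_one, ← Matrix.mul_assoc, hQ,
        Matrix.one_mul]
    have key : ∀ k (hk : k ≤ n),
        ∑ j : Fin k, a (Fin.castLE hk j) = ∑ j : Fin k, b (Fin.castLE hk j) := fun k hk =>
      le_antisymm (prefix_sum_le p hp a b ha P Q h k hk)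
        (prefix_sum_le p hp b a hb P⁻¹ Q⁻¹ h' k hk)
    funext i
    have h1 := key i (le_of_lt i.isLt)
    have h2 := key (i + 1) i.isLt
    rw [Fin.sum_univ_castSucc, Fin.sum_univ_castSucc] at h2
    have e1 : ∀ (f : Fin n → ℕ), (∑ j : Fin i, f (Fin.castLE i.isLt (Fin.castSucc j)))
        = ∑ j : Fin i, f (Fin.castLE (le_of_lt i.isLt) j) := by
      intro f; rfl
    have e2 : Fin.castLE i.isLt (Fin.last i) = i := rfl
    rw [e1 a, e1 b, e2, h1] at h2
    omega
  · rintro rfl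
    exact ⟨1, 1, by simp⟩
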